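/- Let a ∈ ℝ≥0, let I be a finite nonempty index set with elements a_i ∈ ℝ≥0 for i ∈ I, and let J be a finite index set partitioned as the disjoint union J = ⨆_{i∈I} J_i, with elements b_j ∈ ℝ≥0 for j ∈ J. If the maximum occurs twice in the family consisting of a together with (a_i)_{i∈I}, and if for every i ∈ I the maximum occurs twice in the family consisting of a_i together with (b_j)_{j∈J_i}, then the maximum occurs twice in the family consisting of a together with (b_j)_{j∈J}. -/
import Mathlib


open scoped NNReal

/-- The maximum of a family of nonnegative reals occurs twice. -/
def MaxOccursTwice {ι : Type*} (t : ι → ℝ≥0) : Prop :=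
  ∃ i j : ι, i ≠ j ∧ t i = t j ∧ ∀ k, t k ≤ t i

lemma maxTwice_extract {ι : Type*} {x : ℝ≥0} {f : ι → ℝ≥0}
    (h : MaxOccursTwice (fun o : Option ι => o.elim x f)) :
    ∃ j, x ≤ f j ∧ (∀ k, f k ≤ f j) ∧ (x = f j ∨ ∃ j', j' ≠ j ∧ f j' = f j) := by
  obtain ⟨i, i', hne, heq, hmax⟩ := h
  match i, i' with
  | none, none => exact absurd rfl hne
  | none, some j =>
      exact ⟨j, heq.le, fun k => (hmax (some k)).trans heq.le, Or.inl heq⟩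
  | some j, none =>
      exact ⟨j, heq.ge, fun k => hmax (some k), Or.inl heq.symm⟩
  | some j, some j' =>
      exact ⟨j, hmax none, fun k => hmax (some k),
        Or.inr ⟨j', fun h => hne (congrArg some h.symm), heq.symm⟩⟩

/-- Composition step for the maximum-occurs-twice condition.  Here `I` is a
finite nonempty index set, `J` a finite index set partitioned into the fibers
`J_i = p⁻¹(i)` of a map `p : J → I`.  If the maximum occurs twice in the
family `a, (aa i)_{i ∈ I}` and, for each `i ∈ I`, in the family
`aa i, (b j)_{j ∈ J_i}`, then the maximum occurs twice in the family
`a, (b j)_{j ∈ J}`. -/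
theorem maxTwice_comp
    {I J : Type*} [Fintype I] [Nonempty I] [Fintype J]
    (a : ℝ≥0) (aa : I → ℝ≥0) (b : J → ℝ≥0) (p : J → I)
    (h1 : MaxOccursTwice (fun o : Option I => o.elim a aa))
    (h2 : ∀ i : I, MaxOccursTwice
      (fun o : Option {j : J // p j = i} => o.elim (aa i) (fun j => b j.1))) :
    MaxOccursTwice (fun o : Option J => o.elim a b) := by
  choose ji hji1 hji2 hji3 using fun i => maxTwice_extract (h2 i)
  -- global bound: every b j is at most b (ji (p j))
  have hbd : ∀ j : J, b j ≤ b (ji (p j)).1 := fun j => hji2 (p j) ⟨j, rfl⟩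
  obtain ⟨istar, histar⟩ := Finite.exists_max (fun i => b (ji i).1)
  obtain ⟨i1, ha1, ha2, ha3⟩ := maxTwice_extract h1
  -- N := b (ji istar).1 is the max of the whole family a, b
  have hN : ∀ o : Option J, o.elim a b ≤ b (ji istar).1 := by
    intro o
    match o with
    | none => exact le_trans ha1 (le_trans (hji1 i1) (histar i1))
    | some j => exact le_trans (hbd j) (histar (p j))
  rcases hji3 istar with hcase | ⟨j', hj'ne, hj'eq⟩
  · -- aa istar = b (ji istar), use h1's disjunction
    rcases ha3 with hA | ⟨i2, hi2ne, hi2eq⟩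
    · -- a = aa i1 : then a equals the max
      have key : a = b (ji istar).1 :=
        le_antisymm (hN none)
          (by calc b (ji istar).1 = aa istar := hcase.symm
                _ ≤ aa i1 := ha2 istar
                _ = a := hA.symm)
      exact ⟨none, some (ji istar).1, by simp, key, fun k => (hN k).trans key.ge⟩
    · -- two distinct i1 i2 with aa i1 = aa i2 = max
      have e1 : b (ji i1).1 = b (ji istar).1 :=
        le_antisymm (histar i1)
          (by calc b (ji istar).1 = aa istar := hcase.symm
                _ ≤ aa i1 := ha2 istar
                _ ≤ b (ji i1).1 := hji1 i1)
      have e2 : b (ji i2).1 = b (ji istar).1 :=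
        le_antisymm (histar i2)
          (by calc b (ji istar).1 = aa istar := hcase.symm
                _ ≤ aa i1 := ha2 istar
                _ = aa i2 := hi2eq.symm
                _ ≤ b (ji i2).1 := hji1 i2)
      refine ⟨some (ji i2).1, some (ji i1).1, ?_, by simp [e1, e2], fun k => (hN k).trans e2.ge⟩
      intro h
      apply hi2ne
      have : (ji i2).1 = (ji i1).1 := by simpa using h
      rw [← (ji i2).2, ← (ji i1).2, this]
  · -- two distinct elements of the fiber over istar attain the max
    refine ⟨some j'.1, some (ji istar).1, ?_, hj'eq, fun k => (hN k).trans hj'eq.ge⟩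
    simpa [Subtype.ext_iff.symm] using hj'ne
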